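/- Let n ≥ 1, r > 0, r_o ≥ 0, and let γ : ℝ → ℝ be strictly increasing with γ(0) = 0. Let x_o ∈ ℝⁿ be a fixed obstacle center and let x : ℝ → ℝⁿ be a differentiable trajectory such that at every time t with x(t) ≠ x_o, the control barrier function condition ⟨x(t) − x_o, x'(t)⟩ / ‖x(t) − x_o‖ ≥ −γ(‖x(t) − x_o‖ − r − r_o) holds. If ‖x(0) − x_o‖ ≥ r + r_o, then ‖x(t) − x_o‖ ≥ r + r_o for all t ≥ 0 (obstacle avoidance is guaranteed for all time). -/

import Mathlib

/-- Derivative of the norm of a differentiable curve at a point where it is nonzero. -/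
lemma deriv_norm_curve {E : Type*} [NormedAddCommGroup E] [InnerProductSpace ℝ E]
    (g : ℝ → E) (t : ℝ) (hg : DifferentiableAt ℝ g t) (h0 : g t ≠ 0) :
    deriv (fun s => ‖g s‖) t = (inner ℝ (g t) (deriv g t) : ℝ) / ‖g t‖ := by
  have hd : DifferentiableAt ℝ (fun s => ‖g s‖) t := hg.norm ℝ h0
  have h1 : HasDerivAt (fun s => ‖g s‖ ^ 2)
      (2 * ‖g t‖ ^ 1 * deriv (fun s => ‖g s‖) t) t := hd.hasDerivAt.pow 2
  have h2 : HasDerivAt (fun s => ‖g s‖ ^ 2)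
      (2 * (inner ℝ (g t) (deriv g t) : ℝ)) t := hg.hasDerivAt.norm_sq
  have huniq := h1.unique h2
  have hne : ‖g t‖ ≠ 0 := norm_ne_zero_iff.mpr h0
  rw [eq_div_iff hne]
  nlinarith [huniq]

/-- Obstacle avoidance (property P4): under the obstacle-avoidance CBF
condition, a robot initially at distance at least r + r_o from the obstacle
center x_o stays at distance at least r + r_o for all t ≥ 0. -/
theorem stmt_14 (n : ℕ) (hn : 1 ≤ n) (r ro : ℝ) (hr : 0 < r) (hro : 0 ≤ ro)
    (γ : ℝ → ℝ) (hγ : StrictMono γ) (hγ0 : γ 0 = 0)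
    (xo : EuclideanSpace ℝ (Fin n)) (x : ℝ → EuclideanSpace ℝ (Fin n))
    (hx : Differentiable ℝ x)
    (hcbf : ∀ t, x t ≠ xo →
      -γ (‖x t - xo‖ - r - ro) ≤
        (inner ℝ (x t - xo) (deriv x t) : ℝ) / ‖x t - xo‖)
    (h0 : r + ro ≤ ‖x 0 - xo‖) :
    ∀ t, 0 ≤ t → r + ro ≤ ‖x t - xo‖ := by
  set c : ℝ := r + ro with hc
  have hcpos : 0 < c := by positivity
  set g : ℝ → EuclideanSpace ℝ (Fin n) := fun t => x t - xo with hg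
  set h : ℝ → ℝ := fun t => ‖g t‖ with hh
  have hgdiff : Differentiable ℝ g := hx.sub_const xo
  have hgderiv : ∀ t, deriv g t = deriv x t := by
    intro t
    have : HasDerivAt g (deriv x t) t := (hx t).hasDerivAt.sub_const xo
    exact this.deriv
  have hcont : Continuous h := hgdiff.continuous.norm
  -- derivative of h is positive wherever 0 < h t < c
  have hderiv_pos : ∀ t, 0 < h t → h t < c → 0 < deriv h t := by
    intro t ht0 htc
    have hne : g t ≠ 0 := by
      intro hzero
      rw [hh] at ht0; simp only [hzero, norm_zero] at ht0; exact lt_irrefl 0 ht0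
    have hxne : x t ≠ xo := by
      intro hxeq; apply hne; rw [hg]; simp [hxeq]
    have hcbf' := hcbf t hxne
    have hγneg : γ (‖x t - xo‖ - r - ro) < 0 := by
      have : ‖x t - xo‖ - r - ro < 0 := by
        have : h t = ‖x t - xo‖ := rfl
        linarith [htc]
      calc γ (‖x t - xo‖ - r - ro) < γ 0 := hγ this
        _ = 0 := hγ0
    have hinner_pos : 0 < (inner ℝ (x t - xo) (deriv x t) : ℝ) / ‖x t - xo‖ := by
      linarith [hcbf']
    have hd : deriv h t = (inner ℝ (g t) (deriv g t) : ℝ) / ‖g t‖ :=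
      deriv_norm_curve g t (hgdiff t) hne
    rw [hd, hgderiv t]
    exact hinner_pos
  -- main argument by contradiction
  intro t₁ ht₁
  by_contra hcon
  push_neg at hcon
  -- the set of "safe" times in [0, t₁]
  set S : Set ℝ := Set.Icc 0 t₁ ∩ h ⁻¹' Set.Ici c with hS
  have hSne : S.Nonempty := ⟨0, ⟨le_refl 0, ht₁⟩, h0⟩
  have hSbdd : BddAbove S := ⟨t₁, fun y hy => hy.1.2⟩
  have hSclosed : IsClosed S :=
    isClosed_Icc.inter (isClosed_Ici.preimage hcont)
  set s := sSup S with hs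
  have hsmem : s ∈ S := hSclosed.csSup_mem hSne hSbdd
  have hs0 : 0 ≤ s := hsmem.1.1
  have hst₁ : s ≤ t₁ := hsmem.1.2
  have hhs : c ≤ h s := hsmem.2
  have hst₁' : s < t₁ := by
    rcases lt_or_eq_of_le hst₁ with h' | h'
    · exact h'
    · exfalso; rw [h'] at hhs; exact absurd hhs (not_le.mpr hcon)
  -- after s (up to t₁), h < c
  have hafter : ∀ t, s < t → t ≤ t₁ → h t < c := by
    intro t hst htt₁
    by_contra hge
    push_neg at hge
    have : t ∈ S := ⟨⟨le_trans hs0 hst.le, htt₁⟩, hge⟩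
    exact absurd (le_csSup hSbdd this) (not_le.mpr hst)
  -- continuity at s: find δ so that h stays positive near s
  have hconts : ContinuousAt h s := hcont.continuousAt
  rw [Metric.continuousAt_iff] at hconts
  obtain ⟨δ, hδpos, hδ⟩ := hconts c hcpos
  set t₂ := min (s + δ / 2) t₁ with ht₂
  have hst₂ : s < t₂ := lt_min (by linarith) hst₁'
  have ht₂t₁ : t₂ ≤ t₁ := min_le_right _ _
  have hnear : ∀ t ∈ Set.Icc s t₂, 0 < h t := by
    intro t ⟨hts, htt₂⟩
    have h1 : t ≤ s + δ / 2 := le_trans htt₂ (min_le_left _ _)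
    have hdist : dist t s < δ := by
      rw [Real.dist_eq, abs_of_nonneg (by linarith)]
      linarith
    have := hδ hdist
    rw [Real.dist_eq, abs_lt] at this
    linarith
  -- h is strictly monotone on [s, t₂]
  have hmono : StrictMonoOn h (Set.Icc s t₂) := by
    apply StrictMonoOn.mono (s := Set.Icc s t₂) ?_ (le_refl _)
    apply strictMonoOn_of_deriv_pos (convex_Icc s t₂) (hcont.continuousOn)
    intro t ht
    rw [interior_Icc] at ht
    obtain ⟨hts, htt₂⟩ := ht
    have hpos : 0 < h t := hnear t ⟨hts.le, htt₂.le⟩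
    have hlt : h t < c := hafter t hts (le_trans htt₂.le ht₂t₁)
    exact hderiv_pos t hpos hlt
  have hmem_s : s ∈ Set.Icc s t₂ := ⟨le_refl s, hst₂.le⟩
  have hmem_t₂ : t₂ ∈ Set.Icc s t₂ := ⟨hst₂.le, le_refl t₂⟩
  have := hmono hmem_s hmem_t₂ hst₂
  have ht₂lt : h t₂ < c := hafter t₂ hst₂ ht₂t₁
  linarith
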